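/- With t_β as above and any family of starting points r_β → −∞, t_β(r_β) ∼ 8π/(βλ) as β → 0, i.e. βλ t_β(r_β)/(8π) → 1. -/

import Mathlib

open Real Filter Topology Set MeasureTheory

/-- The potential `V_β(r) = −(1/2)((λβ/4) sinh r + log cosh r)`. -/
noncomputable def Vpot (lam β r : ℝ) : ℝ :=
  -(1 / 2) * (lam * (β / 4) * Real.sinh r + Real.log (Real.cosh r))

/-- The mean exit time `t_β(r) = 2 ∫_r^∞ ∫_{−∞}^x exp(2[V_β(x) − V_β(y)]) dy dx`. -/
noncomputable def meanExit (lam β r : ℝ) : ℝ :=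
  2 * ∫ x in Ioi r, ∫ y in Iic x, Real.exp (2 * (Vpot lam β x - Vpot lam β y))

lemma tendsto_sinh_atTop' : Tendsto Real.sinh atTop atTop := by
  apply tendsto_atTop_mono' _ _ ((Real.tendsto_exp_atTop.atTop_div_const two_pos).atTop_add tendsto_const_nhds (C := -(1/2)))
  filter_upwards [eventually_ge_atTop (0:ℝ)] with x hx
  have : Real.exp (-x) ≤ 1 := Real.exp_le_one_iff.2 (by linarith)
  rw [Real.sinh_eq]
  ring_nf
  nlinarith

lemma tendsto_sinh_atBot' : Tendsto Real.sinh atBot atBot := by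
  have h := (tendsto_sinh_atTop'.comp tendsto_neg_atBot_atTop)
  have : Tendsto (fun x => -Real.sinh (-x)) atBot atBot := tendsto_neg_atTop_atBot.comp h
  simpa [Real.sinh_neg] using this

lemma integrableOn_Iic_deriv_of_nonneg'' {g g' : ℝ → ℝ} {a l : ℝ}
    (hderiv : ∀ x ∈ Iic a, HasDerivAt g (g' x) x) (g'pos : ∀ x ∈ Iio a, 0 ≤ g' x)
    (hg : Tendsto g atBot (𝓝 l)) : IntegrableOn g' (Iic a) := by
  have hdg : ∀ x ∈ Ici (-a), HasDerivAt (fun x => -g (-x)) (g' (-x)) x := by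
    intro x hx
    have hx' : -x ∈ Iic a := by simpa using neg_le.mp hx
    have := ((hderiv (-x) hx').comp x (hasDerivAt_neg x)).neg
    exact this.congr_deriv (by ring)
  have hpos : ∀ x ∈ Ioi (-a), 0 ≤ g' (-x) := fun x hx =>
    g'pos (-x) (by simpa using neg_lt.mp hx)
  have hlim : Tendsto (fun x => -g (-x)) atTop (𝓝 (-l)) :=
    ((hg.comp tendsto_neg_atTop_atBot).neg)
  have hInt : IntegrableOn (fun x => g' (-x)) (Ioi (-a)) :=
    integrableOn_Ioi_deriv_of_nonneg' hdg hpos hlim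
  have := ((MeasurePreserving.integrableOn_comp_preimage (Measure.measurePreserving_neg _)
      (Homeomorph.neg ℝ).measurableEmbedding).2 hInt)
  have h2 : IntegrableOn (fun x => g' (- -x)) (Iio a) := this.mono_set (by
    intro x hx
    simp only [mem_preimage, neg_preimage, neg_Ioi, mem_Iio] at *
    simpa using hx)
  simp only [neg_neg] at h2
  rw [← Iio_union_Icc_eq_Iic (le_refl a), integrableOn_union]
  exact ⟨h2, (integrableOn_Icc_iff_integrableOn_Ioc (by simp)).mpr (by simp [IntegrableOn])⟩

lemma inner_int {c : ℝ} (hc : 0 < c) (x : ℝ) :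
    ∫ y in Iic x, Real.cosh y * Real.exp (c * Real.sinh y)
      = Real.exp (c * Real.sinh x) / c := by
  have hderiv : ∀ y : ℝ, HasDerivAt (fun y => Real.exp (c * Real.sinh y) / c)
      (Real.cosh y * Real.exp (c * Real.sinh y)) y := by
    intro y
    have h := (((Real.hasDerivAt_sinh y).const_mul c).exp).div_const c
    refine h.congr_deriv ?_
    rw [mul_div_assoc, mul_div_cancel_left₀ _ hc.ne']
    ring
  have hlim : Tendsto (fun y => Real.exp (c * Real.sinh y) / c) atBot (𝓝 0) := by
    have : Tendsto (fun y => c * Real.sinh y) atBot atBot :=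
      tendsto_sinh_atBot'.const_mul_atBot hc
    simpa using (Real.tendsto_exp_atBot.comp this).div_const c
  have hint : IntegrableOn (fun y => Real.cosh y * Real.exp (c * Real.sinh y)) (Iic x) :=
    integrableOn_Iic_deriv_of_nonneg'' (fun y _ => hderiv y)
      (fun y _ => by positivity) hlim
  have := integral_Iic_of_hasDerivAt_of_tendsto' (fun y _ => hderiv y) hint hlim
  simpa using this

lemma sech_int (r : ℝ) :
    ∫ x in Ioi r, (Real.cosh x)⁻¹ = π / 2 - Real.arctan (Real.sinh r) := by
  have hderiv : ∀ x : ℝ, HasDerivAt (fun x => Real.arctan (Real.sinh x))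
      (Real.cosh x)⁻¹ x := by
    intro x
    have h := (Real.hasDerivAt_arctan (Real.sinh x)).comp x (Real.hasDerivAt_sinh x)
    refine h.congr_deriv ?_
    have h1 : 1 + Real.sinh x ^ 2 = Real.cosh x ^ 2 := by
      rw [Real.cosh_sq]; ring
    have := (Real.cosh_pos x).ne'
    rw [h1, one_div, pow_two, mul_inv, mul_assoc, inv_mul_cancel₀ this, mul_one]
  have hlim : Tendsto (fun x => Real.arctan (Real.sinh x)) atTop (𝓝 (π / 2)) :=
    (tendsto_nhds_of_tendsto_nhdsWithin Real.tendsto_arctan_atTop).comp tendsto_sinh_atTop'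
  exact integral_Ioi_of_hasDerivAt_of_nonneg' (fun x _ => hderiv x)
    (fun x _ => by positivity) hlim

lemma meanExit_eq {lam β : ℝ} (hlam : 0 < lam) (hβ : 0 < β) (r : ℝ) :
    meanExit lam β r = 8 / (lam * β) * (π / 2 - Real.arctan (Real.sinh r)) := by
  set c := lam * (β / 4) with hcdef
  have hc : 0 < c := by positivity
  have key : ∀ x : ℝ, (∫ y in Iic x, Real.exp (2 * (Vpot lam β x - Vpot lam β y)))
      = c⁻¹ * (Real.cosh x)⁻¹ := by
    intro x
    have hrw : ∀ y : ℝ, Real.exp (2 * (Vpot lam β x - Vpot lam β y))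
        = (Real.exp (-(c * Real.sinh x)) * (Real.cosh x)⁻¹)
          * (Real.cosh y * Real.exp (c * Real.sinh y)) := by
      intro y
      rw [Vpot, Vpot]
      rw [show (2 : ℝ) * (-(1 / 2) * (c * Real.sinh x + Real.log (Real.cosh x))
          - -(1 / 2) * (c * Real.sinh y + Real.log (Real.cosh y)))
        = (-(c * Real.sinh x)) + (-Real.log (Real.cosh x)) + (Real.log (Real.cosh y)
          + c * Real.sinh y) by ring]
      simp only [Real.exp_add, Real.exp_neg, Real.exp_log (Real.cosh_pos x),
        Real.exp_log (Real.cosh_pos y)]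
    simp_rw [hrw]
    rw [integral_const_mul, inner_int hc x, Real.exp_neg]
    field_simp
  rw [meanExit]
  rw [setIntegral_congr_fun measurableSet_Ioi (fun x _ => key x)]
  rw [integral_const_mul, sech_int r]
  rw [hcdef]
  field_simp
  ring

/-- For starting points `r_β → −∞`, the mean exit time satisfies
`t_β(r_β) ∼ 8π/(βλ)` as `β → 0`. -/
theorem stmt_9 (lam : ℝ) (hlam : 0 < lam) (r : ℝ → ℝ)
    (hr : Tendsto r (𝓝[>] (0 : ℝ)) atBot) :
    Tendsto (fun β => β * lam * meanExit lam β (r β) / (8 * π))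
      (𝓝[>] (0 : ℝ)) (𝓝 1) := by
  have harctan : Tendsto (fun β => Real.arctan (Real.sinh (r β))) (𝓝[>] (0 : ℝ))
      (𝓝 (-(π / 2))) :=
    ((tendsto_nhds_of_tendsto_nhdsWithin Real.tendsto_arctan_atBot).comp
      tendsto_sinh_atBot').comp hr
  have hmain : Tendsto (fun β => (π / 2 - Real.arctan (Real.sinh (r β))) / π)
      (𝓝[>] (0 : ℝ)) (𝓝 1) := by
    have := (tendsto_const_nhds (x := π / 2) (f := 𝓝[>] (0:ℝ))).sub harctan |>.div_const π
    convert this using 2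
    field_simp
    norm_num
  apply hmain.congr'
  filter_upwards [self_mem_nhdsWithin] with β (hβ : 0 < β)
  rw [meanExit_eq hlam hβ]
  have hπ := Real.pi_ne_zero
  field_simp
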